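/- In the braid group B₆ (on generators σ₁,…,σ₅ with the standard braid relations), the equality σ₂⁻¹ σ₅σ₄σ₁σ₃⁻¹σ₅ σ₄⁻¹σ₅⁻¹σ₂σ₅σ₄ σ₁⁻¹σ₃σ₅⁻¹ σ₄⁻¹σ₅⁻¹σ₁σ₂σ₅σ₄ σ₁σ₃⁻¹σ₅ σ₄⁻¹σ₅⁻¹σ₂⁻¹σ₁⁻¹σ₄⁻¹ = 1 holds. -/

import Mathlib

def braidRels : Set (FreeGroup (Fin 5)) :=
  {r | ∃ i j : Fin 5,
      ((i : ℕ) + 1 < (j : ℕ) ∧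
        r = FreeGroup.of i * FreeGroup.of j * (FreeGroup.of i)⁻¹ * (FreeGroup.of j)⁻¹) ∨
      ((j : ℕ) = (i : ℕ) + 1 ∧
        r = FreeGroup.of i * FreeGroup.of j * FreeGroup.of i *
            (FreeGroup.of j * FreeGroup.of i * FreeGroup.of j)⁻¹)}

abbrev B6 := PresentedGroup braidRels

def σ (i : Fin 5) : B6 := PresentedGroup.of i

lemma rel_eq_one {r : FreeGroup (Fin 5)} (h : r ∈ braidRels) :
    (QuotientGroup.mk r : B6) = 1 :=
  (QuotientGroup.eq_one_iff r).2 (Subgroup.subset_normalClosure h)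

lemma sigma_comm (i j : Fin 5) (h : (i : ℕ) + 1 < (j : ℕ)) :
    σ i * σ j = σ j * σ i := by
  have h1 : (QuotientGroup.mk (FreeGroup.of i * FreeGroup.of j * (FreeGroup.of i)⁻¹ *
      (FreeGroup.of j)⁻¹) : B6) = 1 := rel_eq_one ⟨i, j, Or.inl ⟨h, rfl⟩⟩
  have h2 : σ i * σ j * (σ i)⁻¹ * (σ j)⁻¹ = 1 := h1
  calc σ i * σ j = (σ i * σ j * (σ i)⁻¹ * (σ j)⁻¹) * (σ j * σ i) := by group
    _ = σ j * σ i := by rw [h2]; group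

lemma sigma_braid (i j : Fin 5) (h : (j : ℕ) = (i : ℕ) + 1) :
    σ i * σ j * σ i = σ j * σ i * σ j := by
  have h1 : (QuotientGroup.mk (FreeGroup.of i * FreeGroup.of j * FreeGroup.of i *
      (FreeGroup.of j * FreeGroup.of i * FreeGroup.of j)⁻¹) : B6) = 1 :=
    rel_eq_one ⟨i, j, Or.inr ⟨h, rfl⟩⟩
  have h2 : σ i * σ j * σ i * (σ j * σ i * σ j)⁻¹ = 1 := h1
  calc σ i * σ j * σ i = (σ i * σ j * σ i * (σ j * σ i * σ j)⁻¹) * (σ j * σ i * σ j) := by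
        group
    _ = σ j * σ i * σ j := by rw [h2]; group

set_option maxHeartbeats 2000000 in
theorem key {G : Type*} [Group G] (a b c d e : G)
    (hab : a * b * a = b * a * b) (hbc : b * c * b = c * b * c)
    (hcd : c * d * c = d * c * d) (hde : d * e * d = e * d * e)
    (hac : a * c = c * a) (had : a * d = d * a) (hae : a * e = e * a)
    (hbd : b * d = d * b) (hbe : b * e = e * b) (hce : c * e = e * c) :
    b⁻¹ * e * d * a * c⁻¹ * e * d⁻¹ * e⁻¹ * b * e * d * a⁻¹ * c * e⁻¹ * d⁻¹ * e⁻¹ * a * b * e * d * a * c⁻¹ * e * d⁻¹ * e⁻¹ * b⁻¹ * a⁻¹ * d⁻¹ = 1 := by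
  have v1 : e⁻¹ * b = b * e⁻¹ := by
    rw [show e⁻¹ * b = e⁻¹ * (b * e) * e⁻¹ by group, hbe]; group
  have v2 : d⁻¹ * b = b * d⁻¹ := by
    rw [show d⁻¹ * b = d⁻¹ * (b * d) * d⁻¹ by group, hbd]; group
  have v3 : e⁻¹ * a = a * e⁻¹ := by
    rw [show e⁻¹ * a = e⁻¹ * (a * e) * e⁻¹ by group, hae]; group
  have v4 : d⁻¹ * a = a * d⁻¹ := by
    rw [show d⁻¹ * a = d⁻¹ * (a * d) * d⁻¹ by group, had]; group
  have v5 : a⁻¹ * c = c * a⁻¹ := by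
    rw [show a⁻¹ * c = a⁻¹ * (c * a) * a⁻¹ by group, ← hac]; group
  have v6 : e * b = b * e := by
    rw [show e * b = (e * b) by group, ← hbe]
  have v7 : e * c = c * e := by
    rw [show e * c = (e * c) by group, ← hce]
  have v8 : c⁻¹ * b * c = b * c * b⁻¹ := by
    rw [show c⁻¹ * b * c = c⁻¹ * (b * c * b) * b⁻¹ by group, hbc]; group
  have v9 : c * a = a * c := by
    rw [show c * a = (c * a) by group, ← hac]
  have v10 : d * a = a * d := by
    rw [show d * a = (d * a) by group, ← had]
  have v11 : d * b = b * d := by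
    rw [show d * b = (d * b) by group, ← hbd]
  have v12 : d * e * d⁻¹ = e⁻¹ * d * e := by
    rw [show d * e * d⁻¹ = e⁻¹ * (e * d * e) * d⁻¹ by group, ← hde]; group
  have v13 : a * b * a = b * a * b := by
    rw [show a * b * a = (a * b * a) by group, hab]
  have v14 : b⁻¹ * e = e * b⁻¹ := by
    rw [show b⁻¹ * e = b⁻¹ * (e * b) * b⁻¹ by group, ← hbe]; group
  have v15 : e * a = a * e := by
    rw [show e * a = (e * a) by group, ← hae]
  have v16 : b * d = d * b := by
    rw [show b * d = (b * d) by group, hbd]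
  have v17 : a * d = d * a := by
    rw [show a * d = (a * d) by group, had]
  calc b⁻¹ * e * d * a * c⁻¹ * e * d⁻¹ * e⁻¹ * b * e * d * a⁻¹ * c * e⁻¹ * d⁻¹ * e⁻¹ * a * b * e * d * a * c⁻¹ * e * d⁻¹ * e⁻¹ * b⁻¹ * a⁻¹ * d⁻¹
    _ = b⁻¹ * e * d * a * c⁻¹ * e * d⁻¹ * b * d * a⁻¹ * c * e⁻¹ * d⁻¹ * e⁻¹ * a * b * e * d * a * c⁻¹ * e * d⁻¹ * e⁻¹ * b⁻¹ * a⁻¹ * d⁻¹ := by rw [show b⁻¹ * e * d * a * c⁻¹ * e * d⁻¹ * e⁻¹ * b * e * d * a⁻¹ * c * e⁻¹ * d⁻¹ * e⁻¹ * a * b * e * d * a * c⁻¹ * e * d⁻¹ * e⁻¹ * b⁻¹ * a⁻¹ * d⁻¹ = b⁻¹ * e * d * a * c⁻¹ * e * d⁻¹ * (e⁻¹ * b) * e * d * a⁻¹ * c * e⁻¹ * d⁻¹ * e⁻¹ * a * b * e * d * a * c⁻¹ * e * d⁻¹ * e⁻¹ * b⁻¹ * a⁻¹ * d⁻¹ by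 group, v1]; group
    _ = b⁻¹ * e * d * a * c⁻¹ * e * b * a⁻¹ * c * e⁻¹ * d⁻¹ * e⁻¹ * a * b * e * d * a * c⁻¹ * e * d⁻¹ * e⁻¹ * b⁻¹ * a⁻¹ * d⁻¹ := by rw [show b⁻¹ * e * d * a * c⁻¹ * e * d⁻¹ * b * d * a⁻¹ * c * e⁻¹ * d⁻¹ * e⁻¹ * a * b * e * d * a * c⁻¹ * e * d⁻¹ * e⁻¹ * b⁻¹ * a⁻¹ * d⁻¹ = b⁻¹ * e * d * a * c⁻¹ * e * (d⁻¹ * b) * d * a⁻¹ * c * e⁻¹ * d⁻¹ * e⁻¹ * a * b * e * d * a * c⁻¹ * e * d⁻¹ * e⁻¹ * b⁻¹ * a⁻¹ * d⁻¹ by group, v2]; group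
    _ = b⁻¹ * e * d * a * c⁻¹ * e * b * a⁻¹ * c * e⁻¹ * d⁻¹ * a * e⁻¹ * b * e * d * a * c⁻¹ * e * d⁻¹ * e⁻¹ * b⁻¹ * a⁻¹ * d⁻¹ := by rw [show b⁻¹ * e * d * a * c⁻¹ * e * b * a⁻¹ * c * e⁻¹ * d⁻¹ * e⁻¹ * a * b * e * d * a * c⁻¹ * e * d⁻¹ * e⁻¹ * b⁻¹ * a⁻¹ * d⁻¹ = b⁻¹ * e * d * a * c⁻¹ * e * b * a⁻¹ * c * e⁻¹ * d⁻¹ * (e⁻¹ * a) * b * e * d * a * c⁻¹ * e * d⁻¹ * e⁻¹ * b⁻¹ * a⁻¹ * d⁻¹ by group, v3]; group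
    _ = b⁻¹ * e * d * a * c⁻¹ * e * b * a⁻¹ * c * e⁻¹ * d⁻¹ * a * b * d * a * c⁻¹ * e * d⁻¹ * e⁻¹ * b⁻¹ * a⁻¹ * d⁻¹ := by rw [show b⁻¹ * e * d * a * c⁻¹ * e * b * a⁻¹ * c * e⁻¹ * d⁻¹ * a * e⁻¹ * b * e * d * a * c⁻¹ * e * d⁻¹ * e⁻¹ * b⁻¹ * a⁻¹ * d⁻¹ = b⁻¹ * e * d * a * c⁻¹ * e * b * a⁻¹ * c * e⁻¹ * d⁻¹ * a * (e⁻¹ * b) * e * d * a * c⁻¹ * e * d⁻¹ * e⁻¹ * b⁻¹ * a⁻¹ * d⁻¹ by group, v1]; group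
    _ = b⁻¹ * e * d * a * c⁻¹ * e * b * a⁻¹ * c * e⁻¹ * a * d⁻¹ * b * d * a * c⁻¹ * e * d⁻¹ * e⁻¹ * b⁻¹ * a⁻¹ * d⁻¹ := by rw [show b⁻¹ * e * d * a * c⁻¹ * e * b * a⁻¹ * c * e⁻¹ * d⁻¹ * a * b * d * a * c⁻¹ * e * d⁻¹ * e⁻¹ * b⁻¹ * a⁻¹ * d⁻¹ = b⁻¹ * e * d * a * c⁻¹ * e * b * a⁻¹ * c * e⁻¹ * (d⁻¹ * a) * b * d * a * c⁻¹ * e * d⁻¹ * e⁻¹ * b⁻¹ * a⁻¹ * d⁻¹ by group, v4]; group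
    _ = b⁻¹ * e * d * a * c⁻¹ * e * b * a⁻¹ * c * e⁻¹ * a * b * a * c⁻¹ * e * d⁻¹ * e⁻¹ * b⁻¹ * a⁻¹ * d⁻¹ := by rw [show b⁻¹ * e * d * a * c⁻¹ * e * b * a⁻¹ * c * e⁻¹ * a * d⁻¹ * b * d * a * c⁻¹ * e * d⁻¹ * e⁻¹ * b⁻¹ * a⁻¹ * d⁻¹ = b⁻¹ * e * d * a * c⁻¹ * e * b * a⁻¹ * c * e⁻¹ * a * (d⁻¹ * b) * d * a * c⁻¹ * e * d⁻¹ * e⁻¹ * b⁻¹ * a⁻¹ * d⁻¹ by group, v2]; group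
    _ = b⁻¹ * e * d * a * c⁻¹ * e * b * a⁻¹ * c * a * e⁻¹ * b * a * c⁻¹ * e * d⁻¹ * e⁻¹ * b⁻¹ * a⁻¹ * d⁻¹ := by rw [show b⁻¹ * e * d * a * c⁻¹ * e * b * a⁻¹ * c * e⁻¹ * a * b * a * c⁻¹ * e * d⁻¹ * e⁻¹ * b⁻¹ * a⁻¹ * d⁻¹ = b⁻¹ * e * d * a * c⁻¹ * e * b * a⁻¹ * c * (e⁻¹ * a) * b * a * c⁻¹ * e * d⁻¹ * e⁻¹ * b⁻¹ * a⁻¹ * d⁻¹ by group, v3]; group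
    _ = b⁻¹ * e * d * a * c⁻¹ * e * b * c * e⁻¹ * b * a * c⁻¹ * e * d⁻¹ * e⁻¹ * b⁻¹ * a⁻¹ * d⁻¹ := by rw [show b⁻¹ * e * d * a * c⁻¹ * e * b * a⁻¹ * c * a * e⁻¹ * b * a * c⁻¹ * e * d⁻¹ * e⁻¹ * b⁻¹ * a⁻¹ * d⁻¹ = b⁻¹ * e * d * a * c⁻¹ * e * b * (a⁻¹ * c) * a * e⁻¹ * b * a * c⁻¹ * e * d⁻¹ * e⁻¹ * b⁻¹ * a⁻¹ * d⁻¹ by group, v5]; group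
    _ = b⁻¹ * e * d * a * c⁻¹ * b * e * c * e⁻¹ * b * a * c⁻¹ * e * d⁻¹ * e⁻¹ * b⁻¹ * a⁻¹ * d⁻¹ := by rw [show b⁻¹ * e * d * a * c⁻¹ * e * b * c * e⁻¹ * b * a * c⁻¹ * e * d⁻¹ * e⁻¹ * b⁻¹ * a⁻¹ * d⁻¹ = b⁻¹ * e * d * a * c⁻¹ * (e * b) * c * e⁻¹ * b * a * c⁻¹ * e * d⁻¹ * e⁻¹ * b⁻¹ * a⁻¹ * d⁻¹ by group, v6]; group
    _ = b⁻¹ * e * d * a * c⁻¹ * b * c * b * a * c⁻¹ * e * d⁻¹ * e⁻¹ * b⁻¹ * a⁻¹ * d⁻¹ := by rw [show b⁻¹ * e * d * a * c⁻¹ * b * e * c * e⁻¹ * b * a * c⁻¹ * e * d⁻¹ * e⁻¹ * b⁻¹ * a⁻¹ * d⁻¹ = b⁻¹ * e * d * a * c⁻¹ * b * (e * c) * e⁻¹ * b * a * c⁻¹ * e * d⁻¹ * e⁻¹ * b⁻¹ * a⁻¹ * d⁻¹ by group, v7]; group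
    _ = b⁻¹ * e * d * a * b * c * a * c⁻¹ * e * d⁻¹ * e⁻¹ * b⁻¹ * a⁻¹ * d⁻¹ := by rw [show b⁻¹ * e * d * a * c⁻¹ * b * c * b * a * c⁻¹ * e * d⁻¹ * e⁻¹ * b⁻¹ * a⁻¹ * d⁻¹ = b⁻¹ * e * d * a * (c⁻¹ * b * c) * b * a * c⁻¹ * e * d⁻¹ * e⁻¹ * b⁻¹ * a⁻¹ * d⁻¹ by group, v8]; group
    _ = b⁻¹ * e * d * a * b * a * e * d⁻¹ * e⁻¹ * b⁻¹ * a⁻¹ * d⁻¹ := by rw [show b⁻¹ * e * d * a * b * c * a * c⁻¹ * e * d⁻¹ * e⁻¹ * b⁻¹ * a⁻¹ * d⁻¹ = b⁻¹ * e * d * a * b * (c * a) * c⁻¹ * e * d⁻¹ * e⁻¹ * b⁻¹ * a⁻¹ * d⁻¹ by group, v9]; group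
    _ = b⁻¹ * e * a * d * b * a * e * d⁻¹ * e⁻¹ * b⁻¹ * a⁻¹ * d⁻¹ := by rw [show b⁻¹ * e * d * a * b * a * e * d⁻¹ * e⁻¹ * b⁻¹ * a⁻¹ * d⁻¹ = b⁻¹ * e * (d * a) * b * a * e * d⁻¹ * e⁻¹ * b⁻¹ * a⁻¹ * d⁻¹ by group, v10]; group
    _ = b⁻¹ * e * a * b * d * a * e * d⁻¹ * e⁻¹ * b⁻¹ * a⁻¹ * d⁻¹ := by rw [show b⁻¹ * e * a * d * b * a * e * d⁻¹ * e⁻¹ * b⁻¹ * a⁻¹ * d⁻¹ = b⁻¹ * e * a * (d * b) * a * e * d⁻¹ * e⁻¹ * b⁻¹ * a⁻¹ * d⁻¹ by group, v11]; group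
    _ = b⁻¹ * e * a * b * a * d * e * d⁻¹ * e⁻¹ * b⁻¹ * a⁻¹ * d⁻¹ := by rw [show b⁻¹ * e * a * b * d * a * e * d⁻¹ * e⁻¹ * b⁻¹ * a⁻¹ * d⁻¹ = b⁻¹ * e * a * b * (d * a) * e * d⁻¹ * e⁻¹ * b⁻¹ * a⁻¹ * d⁻¹ by group, v10]; group
    _ = b⁻¹ * e * a * b * a * e⁻¹ * d * b⁻¹ * a⁻¹ * d⁻¹ := by rw [show b⁻¹ * e * a * b * a * d * e * d⁻¹ * e⁻¹ * b⁻¹ * a⁻¹ * d⁻¹ = b⁻¹ * e * a * b * a * (d * e * d⁻¹) * e⁻¹ * b⁻¹ * a⁻¹ * d⁻¹ by group, v12]; group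
    _ = b⁻¹ * e * b * a * b * e⁻¹ * d * b⁻¹ * a⁻¹ * d⁻¹ := by rw [show b⁻¹ * e * a * b * a * e⁻¹ * d * b⁻¹ * a⁻¹ * d⁻¹ = b⁻¹ * e * (a * b * a) * e⁻¹ * d * b⁻¹ * a⁻¹ * d⁻¹ by group, v13]; group
    _ = e * a * b * e⁻¹ * d * b⁻¹ * a⁻¹ * d⁻¹ := by rw [show b⁻¹ * e * b * a * b * e⁻¹ * d * b⁻¹ * a⁻¹ * d⁻¹ = (b⁻¹ * e) * b * a * b * e⁻¹ * d * b⁻¹ * a⁻¹ * d⁻¹ by group, v14]; group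
    _ = a * e * b * e⁻¹ * d * b⁻¹ * a⁻¹ * d⁻¹ := by rw [show e * a * b * e⁻¹ * d * b⁻¹ * a⁻¹ * d⁻¹ = (e * a) * b * e⁻¹ * d * b⁻¹ * a⁻¹ * d⁻¹ by group, v15]
    _ = a * b * d * b⁻¹ * a⁻¹ * d⁻¹ := by rw [show a * e * b * e⁻¹ * d * b⁻¹ * a⁻¹ * d⁻¹ = a * (e * b) * e⁻¹ * d * b⁻¹ * a⁻¹ * d⁻¹ by group, v6]; group
    _ = a * d * a⁻¹ * d⁻¹ := by rw [show a * b * d * b⁻¹ * a⁻¹ * d⁻¹ = a * (b * d) * b⁻¹ * a⁻¹ * d⁻¹ by group, v16]; group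
    _ = 1 := by rw [show a * d * a⁻¹ * d⁻¹ = (a * d) * a⁻¹ * d⁻¹ by group, v17]; group

theorem stmt14 :
    (σ 1)⁻¹ * σ 4 * σ 3 * σ 0 * (σ 2)⁻¹ * σ 4 *
    (σ 3)⁻¹ * (σ 4)⁻¹ * σ 1 * σ 4 * σ 3 *
    (σ 0)⁻¹ * σ 2 * (σ 4)⁻¹ *
    (σ 3)⁻¹ * (σ 4)⁻¹ * σ 0 * σ 1 * σ 4 * σ 3 *
    σ 0 * (σ 2)⁻¹ * σ 4 *
    (σ 3)⁻¹ * (σ 4)⁻¹ * (σ 1)⁻¹ * (σ 0)⁻¹ * (σ 3)⁻¹ = 1 :=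
  key (σ 0) (σ 1) (σ 2) (σ 3) (σ 4)
    (sigma_braid 0 1 rfl) (sigma_braid 1 2 rfl) (sigma_braid 2 3 rfl) (sigma_braid 3 4 rfl)
    (sigma_comm 0 2 (by decide)) (sigma_comm 0 3 (by decide)) (sigma_comm 0 4 (by decide))
    (sigma_comm 1 3 (by decide)) (sigma_comm 1 4 (by decide)) (sigma_comm 2 4 (by decide))
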